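/- For any prime number p ≥ 5 and any integer n ≥ 2, the group SL_n(ℤ_p) of n×n matrices over the p-adic integers with determinant 1 is a perfect group, i.e., it equals its own commutator subgroup. -/

import Mathlib

namespace SLperfect
open Matrix
open scoped commutatorElement
set_option linter.unusedSectionVars false
set_option maxHeartbeats 1000000
variable {ι : Type*} [Fintype ι] [DecidableEq ι] {R : Type*} [CommRing R]

/-- Left-multiplying by `Ec k v` adds `v i` times row `k` to row `i`, for each `i`. -/
def Ec (k : ι) (v : ι → R) : Matrix ι ι R :=
  1 + Matrix.of (fun i j => if j = k then v i else 0)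

/-- Right-multiplying by `Er k w` adds `w j` times column `k` to column `j`. -/
def Er (k : ι) (w : ι → R) : Matrix ι ι R :=
  1 + Matrix.of (fun i j => if i = k then w j else 0)

lemma Ec_mul (k : ι) (v : ι → R) (M : Matrix ι ι R) (i j : ι) :
    (Ec k v * M) i j = M i j + v i * M k j := by
  simp only [Ec, add_mul, one_mul, Matrix.add_apply, Matrix.mul_apply, of_apply, ite_mul,
    zero_mul, Finset.sum_ite_eq', Finset.mem_univ, if_true, Finset.sum_add_distrib,
    Matrix.one_apply, Finset.sum_ite_eq]

lemma mul_Er (k : ι) (w : ι → R) (M : Matrix ι ι R) (i j : ι) :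
    (M * Er k w) i j = M i j + M i k * w j := by
  simp only [Er, mul_add, mul_one, Matrix.add_apply, Matrix.mul_apply, of_apply, mul_ite,
    mul_zero, Finset.sum_ite_eq, Finset.mem_univ, if_true, Finset.sum_add_distrib,
    Matrix.one_apply, Finset.sum_ite_eq']

lemma Ec_apply (k : ι) (v : ι → R) (i j : ι) :
    Ec k v i j = (if i = j then 1 else 0) + if j = k then v i else 0 := by
  simp [Ec, Matrix.one_apply]

lemma Er_apply (k : ι) (w : ι → R) (i j : ι) :
    Er k w i j = (if i = j then 1 else 0) + if i = k then w j else 0 := by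
  simp [Er, Matrix.one_apply]

lemma Ec_zero (k : ι) : Ec k (0 : ι → R) = 1 := by
  ext i j; simp [Ec]

lemma Er_zero (k : ι) : Er k (0 : ι → R) = 1 := by
  ext i j; simp [Er]

lemma Ec_mul_Ec (k : ι) (v₁ v₂ : ι → R) (h : v₂ k = 0) :
    Ec k v₁ * Ec k v₂ = Ec k (v₁ + v₂) := by
  ext i j
  rw [Ec_mul, Ec_apply, Ec_apply, Ec_apply]
  by_cases hj : j = k <;> by_cases hij : i = j <;> simp_all [eq_comm] <;> ring

lemma Er_mul_Er (k : ι) (w₁ w₂ : ι → R) (h : w₁ k = 0) :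
    Er k w₁ * Er k w₂ = Er k (w₁ + w₂) := by
  ext i j
  rw [mul_Er, Er_apply, Er_apply, Er_apply]
  by_cases hi : i = k <;> by_cases hij : i = j <;> simp_all [eq_comm] <;> ring

lemma Ec_single (k a : ι) (c : R) (h : a ≠ k) :
    Ec k (Pi.single a c) = transvection a k c := by
  ext i j
  rw [Ec_apply, transvection, Matrix.add_apply, Matrix.one_apply, Matrix.single]
  by_cases hi : i = a <;> by_cases hj : j = k <;> simp_all [Pi.single_apply, eq_comm]

lemma Er_single (k a : ι) (c : R) (h : a ≠ k) :
    Er k (Pi.single a c) = transvection k a c := by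
  ext i j
  rw [Er_apply, transvection, Matrix.add_apply, Matrix.one_apply, Matrix.single]
  by_cases hi : i = k <;> by_cases hj : j = a <;> simp_all [Pi.single_apply, eq_comm]


lemma diag_mul_std_mul_diag (d d' : ι → R) (i j : ι) (s : R) :
    diagonal d * Matrix.single i j s * diagonal d' = Matrix.single i j (d i * s * d' j) := by
  ext a b
  simp only [mul_diagonal, diagonal_mul, Matrix.single, of_apply, mul_ite, ite_mul,
    mul_zero, zero_mul]
  by_cases h : i = a ∧ j = b
  · obtain ⟨rfl, rfl⟩ := h
    simp only [and_self, if_true]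
    try ring
  · simp [h]

lemma transvection_mem_commutator (h2 : IsUnit (2 : R)) (h3 : IsUnit (3 : R))
    {i j : ι} (hij : i ≠ j) (c : R) (A : SpecialLinearGroup ι R)
    (hA : (A : Matrix ι ι R) = transvection i j c) :
    A ∈ commutator (SpecialLinearGroup ι R) := by
  set u := h2.unit with hu
  set t := h3.unit with ht
  have hu2 : (u : R) = 2 := h2.unit_spec
  have ht3 : (t : R) = 3 := h3.unit_spec
  set d : ι → R := Function.update (Function.update (1 : ι → R) i (2 : R)) j (↑u⁻¹) with hd
  set d' : ι → R := Function.update (Function.update (1 : ι → R) i (↑u⁻¹)) j (2 : R) with hd'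
  have hdd' : ∀ l, d l * d' l = 1 := by
    intro l
    by_cases hl : l = j
    · subst hl
      simp [hd, hd', Function.update_self, ← hu2, Units.inv_mul]
    · by_cases hl' : l = i
      · subst hl'
        simp [hd, hd', Function.update_of_ne hij, Function.update_self, ← hu2, Units.mul_inv]
      · simp [hd, hd', Function.update_of_ne hl, Function.update_of_ne hl']
  have hDD' : diagonal d * diagonal d' = (1 : Matrix ι ι R) := by
    rw [diagonal_mul_diagonal, show (fun l => d l * d' l) = (1 : ι → R) from funext hdd']
    exact diagonal_one
  have hprod : ∀ (f : ι → R) (x y : R), f = Function.update (Function.update (1:ι→R) i x) j y →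
      ∏ l, f l = y * x := by
    intro f x y hf
    subst hf
    rw [Finset.prod_update_of_mem (Finset.mem_univ j), Finset.sdiff_singleton_eq_erase,
      Finset.prod_update_of_mem (by simp [hij] : i ∈ Finset.univ.erase j)]
    simp [mul_assoc]
  have hDdet : det (diagonal d) = 1 := by
    rw [det_diagonal, hprod d 2 (↑u⁻¹) hd, ← hu2, Units.inv_mul]
  have hD'det : det (diagonal d') = 1 := by
    rw [det_diagonal, hprod d' (↑u⁻¹) 2 hd', ← hu2, Units.mul_inv]
  set s : R := c * ↑t⁻¹ with hs
  set D : SpecialLinearGroup ι R := ⟨diagonal d, hDdet⟩ with hD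
  set D' : SpecialLinearGroup ι R := ⟨diagonal d', hD'det⟩ with hD2
  set T : SpecialLinearGroup ι R := ⟨transvection i j s, det_transvection_of_ne i j hij s⟩
  set T' : SpecialLinearGroup ι R := ⟨transvection i j (-s), det_transvection_of_ne i j hij _⟩
  have hDinv : D⁻¹ = D' := by
    apply inv_eq_of_mul_eq_one_right
    apply Subtype.ext
    exact hDD'
  have hTinv : T⁻¹ = T' := by
    apply inv_eq_of_mul_eq_one_right
    apply Subtype.ext
    show transvection i j s * transvection i j (-s) = 1
    rw [transvection_mul_transvection_same i j hij, add_neg_cancel, transvection_zero]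
  have key : ⁅D, T⁆ = A := by
    rw [commutatorElement_def, hDinv, hTinv]
    apply Subtype.ext
    rw [hA]
    show (diagonal d : Matrix ι ι R) * transvection i j s * diagonal d' *
        transvection i j (-s) = transvection i j c
    have e1 : (diagonal d : Matrix ι ι R) * transvection i j s * diagonal d' =
        transvection i j (2 * s * 2) := by
      have hdi : d i = 2 := by
        rw [hd, Function.update_of_ne hij, Function.update_self]
      have hd'j : d' j = 2 := by rw [hd', Function.update_self]
      rw [transvection, mul_add, mul_one, add_mul, hDD', diag_mul_std_mul_diag, hdi, hd'j,
        transvection]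
    rw [e1, transvection_mul_transvection_same i j hij]
    congr 1
    have : 2 * s * 2 + -s = 3 * s := by ring
    rw [this, hs, ← ht3, ← mul_assoc, mul_comm (t:R) c, mul_assoc, Units.mul_inv, mul_one]
  rw [← key]
  exact Subgroup.commutator_mem_commutator (Subgroup.mem_top D) (Subgroup.mem_top T)


lemma Ec_aux (h2 : IsUnit (2 : R)) (h3 : IsUnit (3 : R)) (k : ι) (s : Finset ι) :
    ∀ v : ι → R, v k = 0 → (∀ i ∉ s, v i = 0) →
      det (Ec k v) = 1 ∧ ∀ A : SpecialLinearGroup ι R, (A : Matrix ι ι R) = Ec k v →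
        A ∈ commutator (SpecialLinearGroup ι R) := by
  induction s using Finset.induction with
  | empty =>
    intro v hv hsupp
    have hv0 : v = 0 := funext fun i => hsupp i (Finset.notMem_empty i)
    subst hv0
    rw [Ec_zero]
    refine ⟨det_one, fun A hA => ?_⟩
    have : A = 1 := Subtype.ext (by rw [hA]; rfl)
    rw [this]
    exact Subgroup.one_mem _
  | @insert a s' hnotin ih =>
    intro v hv hsupp
    set v' := Function.update v a 0 with hv'def
    have hv'k : v' k = 0 := by
      by_cases hak : k = a
      · simp [hv'def, hak]
      · simp [hv'def, Function.update_of_ne hak, hv]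
    have hsupp' : ∀ i ∉ s', v' i = 0 := by
      intro i hi
      by_cases hia : i = a
      · simp [hv'def, hia]
      · rw [hv'def, Function.update_of_ne hia]
        exact hsupp i (by simp [hia, hi])
    obtain ⟨hdet', hmem'⟩ := ih v' hv'k hsupp'
    by_cases hak : a = k
    · have hvv : v' = v := by
        rw [hv'def, hak, ← hv]
        exact Function.update_eq_self k v
      rw [← hvv]
      exact ⟨hdet', hmem'⟩
    · have hsum : Pi.single a (v a) + v' = v := by
        funext i
        by_cases hia : i = a
        · subst hia; simp [hv'def]
        · simp [hv'def, Function.update_of_ne hia, Pi.single_apply, hia]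
      have hdecomp : Ec k v = transvection a k (v a) * Ec k v' := by
        rw [← Ec_single k a (v a) hak, Ec_mul_Ec k _ _ hv'k, hsum]
      have hdet : det (Ec k v) = 1 := by
        rw [hdecomp, det_mul, det_transvection_of_ne a k hak, hdet', one_mul]
      refine ⟨hdet, fun A hA => ?_⟩
      set T : SpecialLinearGroup ι R := ⟨transvection a k (v a), det_transvection_of_ne a k hak _⟩
      set B : SpecialLinearGroup ι R := ⟨Ec k v', hdet'⟩
      have hTB : T * B = A := Subtype.ext (by rw [hA, hdecomp]; rfl)
      rw [← hTB]
      exact Subgroup.mul_mem _ (transvection_mem_commutator h2 h3 hak (v a) T rfl)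
        (hmem' B rfl)


lemma Er_aux (h2 : IsUnit (2 : R)) (h3 : IsUnit (3 : R)) (k : ι) (s : Finset ι) :
    ∀ v : ι → R, v k = 0 → (∀ i ∉ s, v i = 0) →
      det (Er k v) = 1 ∧ ∀ A : SpecialLinearGroup ι R, (A : Matrix ι ι R) = Er k v →
        A ∈ commutator (SpecialLinearGroup ι R) := by
  induction s using Finset.induction with
  | empty =>
    intro v hv hsupp
    have hv0 : v = 0 := funext fun i => hsupp i (Finset.notMem_empty i)
    subst hv0
    rw [Er_zero]
    refine ⟨det_one, fun A hA => ?_⟩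
    have : A = 1 := Subtype.ext (by rw [hA]; rfl)
    rw [this]
    exact Subgroup.one_mem _
  | @insert a s' hnotin ih =>
    intro v hv hsupp
    set v' := Function.update v a 0 with hv'def
    have hv'k : v' k = 0 := by
      by_cases hak : k = a
      · simp [hv'def, hak]
      · simp [hv'def, Function.update_of_ne hak, hv]
    have hsupp' : ∀ i ∉ s', v' i = 0 := by
      intro i hi
      by_cases hia : i = a
      · simp [hv'def, hia]
      · rw [hv'def, Function.update_of_ne hia]
        exact hsupp i (by simp [hia, hi])
    obtain ⟨hdet', hmem'⟩ := ih v' hv'k hsupp'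
    by_cases hak : a = k
    · have hvv : v' = v := by
        rw [hv'def, hak, ← hv]
        exact Function.update_eq_self k v
      rw [← hvv]
      exact ⟨hdet', hmem'⟩
    · have hsum : Pi.single a (v a) + v' = v := by
        funext i
        by_cases hia : i = a
        · subst hia; simp [hv'def]
        · simp [hv'def, Function.update_of_ne hia, Pi.single_apply, hia]
      have hdecomp : Er k v = transvection k a (v a) * Er k v' := by
        rw [← Er_single k a (v a) hak, Er_mul_Er k _ _ (by simp [Pi.single_apply, hak, eq_comm]), hsum]
      have hdet : det (Er k v) = 1 := by
        rw [hdecomp, det_mul, det_transvection_of_ne k a (Ne.symm hak), hdet', one_mul]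
      refine ⟨hdet, fun A hA => ?_⟩
      set T : SpecialLinearGroup ι R := ⟨transvection k a (v a), det_transvection_of_ne k a (Ne.symm hak) _⟩
      set B : SpecialLinearGroup ι R := ⟨Er k v', hdet'⟩
      have hTB : T * B = A := Subtype.ext (by rw [hA, hdecomp]; rfl)
      rw [← hTB]
      exact Subgroup.mul_mem _ (transvection_mem_commutator h2 h3 (Ne.symm hak) (v a) T rfl)
        (hmem' B rfl)



lemma Ec_mem (h2 : IsUnit (2 : R)) (h3 : IsUnit (3 : R)) (k : ι) (v : ι → R) (hv : v k = 0) :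
    det (Ec k v) = 1 ∧ ∀ A : SpecialLinearGroup ι R, (A : Matrix ι ι R) = Ec k v →
      A ∈ commutator (SpecialLinearGroup ι R) :=
  Ec_aux h2 h3 k Finset.univ v hv (by simp)

lemma Er_mem (h2 : IsUnit (2 : R)) (h3 : IsUnit (3 : R)) (k : ι) (w : ι → R) (hw : w k = 0) :
    det (Er k w) = 1 ∧ ∀ A : SpecialLinearGroup ι R, (A : Matrix ι ι R) = Er k w →
      A ∈ commutator (SpecialLinearGroup ι R) :=
  Er_aux h2 h3 k Finset.univ w hw (by simp)

lemma mem_of_mul_mem {E A B : SpecialLinearGroup ι R} (h : E * A = B)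
    (hE : E ∈ commutator (SpecialLinearGroup ι R))
    (hB : B ∈ commutator (SpecialLinearGroup ι R)) :
    A ∈ commutator (SpecialLinearGroup ι R) := by
  have hA : A = E⁻¹ * B := by rw [← h]; group
  rw [hA]
  exact Subgroup.mul_mem _ (Subgroup.inv_mem _ hE) hB

lemma mem_of_mem_mul {F A B : SpecialLinearGroup ι R} (h : A * F = B)
    (hF : F ∈ commutator (SpecialLinearGroup ι R))
    (hB : B ∈ commutator (SpecialLinearGroup ι R)) :
    A ∈ commutator (SpecialLinearGroup ι R) := by
  have hA : A = B * F⁻¹ := by rw [← h]; group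
  rw [hA]
  exact Subgroup.mul_mem _ hB (Subgroup.inv_mem _ hF)

lemma exists_unit_col [IsLocalRing R] (M : Matrix ι ι R) (hM : det M = 1) (K : ι) :
    ∃ i, IsUnit (M i K) := by
  by_contra hcon
  push_neg at hcon
  have h1 : (1 : R) = ∑ i, adjugate M K i * M i K := by
    have hadj := Matrix.adjugate_mul M
    have : (adjugate M * M) K K = (1 : R) := by rw [hadj, hM]; simp
    rw [← this, Matrix.mul_apply]
  have hmem : (1 : R) ∈ IsLocalRing.maximalIdeal R := by
    rw [h1]
    refine Ideal.sum_mem _ fun i _ => ?_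
    rw [IsLocalRing.mem_maximalIdeal, mem_nonunits_iff]
    intro hu
    exact hcon i (isUnit_of_mul_isUnit_right hu)
  rw [IsLocalRing.mem_maximalIdeal, mem_nonunits_iff] at hmem
  exact hmem isUnit_one

end SLperfect

namespace SLperfect
open Matrix

variable {R : Type*} [CommRing R] {n : ℕ}

/-- The clearing step: once the pivot entry is `1`, clear the `k`-th row and column. -/
lemma step2 (h2 : IsUnit (2 : R)) (h3 : IsUnit (3 : R)) (k : ℕ) (hkn : k < n)
    (ih : ∀ N : Matrix (Fin n) (Fin n) R, det N = 1 →
      (∀ i j : Fin n, (k ≤ (i : ℕ) ∨ k ≤ (j : ℕ)) → N i j = (1 : Matrix (Fin n) (Fin n) R) i j) →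
      ∀ A : SpecialLinearGroup (Fin n) R, (A : Matrix (Fin n) (Fin n) R) = N →
        A ∈ commutator (SpecialLinearGroup (Fin n) R))
    (N : Matrix (Fin n) (Fin n) R) (hN : det N = 1)
    (hout : ∀ i j : Fin n, (k + 1 ≤ (i : ℕ) ∨ k + 1 ≤ (j : ℕ)) →
      N i j = (1 : Matrix (Fin n) (Fin n) R) i j)
    (hpivot : N ⟨k, hkn⟩ ⟨k, hkn⟩ = 1)
    (A : SpecialLinearGroup (Fin n) R) (hA : (A : Matrix (Fin n) (Fin n) R) = N) :
    A ∈ commutator (SpecialLinearGroup (Fin n) R) := by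
  set K : Fin n := ⟨k, hkn⟩ with hK
  set v : Fin n → R := fun i => if i = K then 0 else -(N i K) with hv
  have hvK : v K = 0 := by simp [hv]
  set N₂ : Matrix (Fin n) (Fin n) R := Ec K v * N with hN₂
  have hN₂e : ∀ i j, N₂ i j = N i j + v i * N K j := fun i j => Ec_mul K v N i j
  have hN₂K : ∀ j, N₂ K j = N K j := by intro j; rw [hN₂e, hvK, zero_mul, add_zero]
  have hN₂col : ∀ i, i ≠ K → N₂ i K = 0 := by
    intro i hi
    rw [hN₂e, hpivot, hv]
    simp [hi]
  have hN₂KK : N₂ K K = 1 := by rw [hN₂K, hpivot]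
  set w : Fin n → R := fun j => if j = K then 0 else -(N₂ K j) with hw
  have hwK : w K = 0 := by simp [hw]
  set N₃ : Matrix (Fin n) (Fin n) R := N₂ * Er K w with hN₃
  have hN₃e : ∀ i j, N₃ i j = N₂ i j + N₂ i K * w j := fun i j => mul_Er K w N₂ i j
  obtain ⟨hEdet, hEmem⟩ := Ec_mem h2 h3 K v hvK
  obtain ⟨hFdet, hFmem⟩ := Er_mem h2 h3 K w hwK
  have hN₂det : det N₂ = 1 := by rw [hN₂, det_mul, hEdet, hN, one_mul]
  have hN₃det : det N₃ = 1 := by rw [hN₃, det_mul, hFdet, hN₂det, one_mul]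
  have hN₃out : ∀ i j : Fin n, (k ≤ (i : ℕ) ∨ k ≤ (j : ℕ)) →
      N₃ i j = (1 : Matrix (Fin n) (Fin n) R) i j := by
    intro i j hij
    by_cases hjK : j = K
    · subst hjK
      by_cases hiK : i = K
      · subst hiK
        rw [hN₃e, hwK, mul_zero, add_zero, hN₂KK, Matrix.one_apply_eq]
      · rw [hN₃e, hwK, mul_zero, add_zero, hN₂col i hiK, Matrix.one_apply_ne hiK]
    · by_cases hiK : i = K
      · subst hiK
        rw [hN₃e, hN₂KK, one_mul, hw]
        simp only [hjK, if_false]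
        rw [hN₂K, Matrix.one_apply_ne (Ne.symm hjK)]
        ring
      · -- i ≠ K, j ≠ K ; so in fact k+1 ≤ i or k+1 ≤ j
        have hij' : (k + 1 ≤ (i : ℕ) ∨ k + 1 ≤ (j : ℕ)) := by
          rcases hij with h | h
          · left
            rcases Nat.eq_or_lt_of_le h with he | hl
            · exact absurd (Fin.ext he.symm : i = K) hiK
            · exact hl
          · right
            rcases Nat.eq_or_lt_of_le h with he | hl
            · exact absurd (Fin.ext he.symm : j = K) hjK
            · exact hl
        rw [hN₃e, hN₂col i hiK, zero_mul, add_zero, hN₂e]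
        rcases hij' with h | h
        · have hvi : v i = 0 := by
            rw [hv]
            simp only [hiK, if_false, neg_eq_zero]
            rw [hout i K (Or.inl h)]
            exact Matrix.one_apply_ne hiK
          rw [hvi, zero_mul, add_zero]
          exact hout i j (Or.inl h)
        · have hNKj : N K j = 0 := by
            rw [hout K j (Or.inr h)]
            exact Matrix.one_apply_ne (Ne.symm hjK)
          rw [hNKj, mul_zero, add_zero]
          exact hout i j (Or.inr h)
  set E : SpecialLinearGroup (Fin n) R := ⟨Ec K v, hEdet⟩ with hE
  set F : SpecialLinearGroup (Fin n) R := ⟨Er K w, hFdet⟩ with hF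
  set A₃ : SpecialLinearGroup (Fin n) R := ⟨N₃, hN₃det⟩ with hA₃
  have hEAF : E * A * F = A₃ := by
    apply Subtype.ext
    show Ec K v * (A : Matrix (Fin n) (Fin n) R) * Er K w = N₃
    rw [hA, hN₃, hN₂]
  have hA₃mem : A₃ ∈ commutator (SpecialLinearGroup (Fin n) R) :=
    ih N₃ hN₃det hN₃out A₃ rfl
  have hEmem' : E ∈ commutator (SpecialLinearGroup (Fin n) R) := hEmem E rfl
  have hFmem' : F ∈ commutator (SpecialLinearGroup (Fin n) R) := hFmem F rfl
  have h1 : E * A * F = A₃ := hEAF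
  have : A = E⁻¹ * A₃ * F⁻¹ := by rw [← h1]; group
  rw [this]
  exact Subgroup.mul_mem _ (Subgroup.mul_mem _ (Subgroup.inv_mem _ hEmem') hA₃mem)
    (Subgroup.inv_mem _ hFmem')

end SLperfect

namespace SLperfect
open Matrix

variable {R : Type*} [CommRing R] [IsLocalRing R] {n : ℕ}

lemma main_aux (h2 : IsUnit (2 : R)) (h3 : IsUnit (3 : R)) (k : ℕ) :
    ∀ M : Matrix (Fin n) (Fin n) R, det M = 1 →
      (∀ i j : Fin n, (k ≤ (i : ℕ) ∨ k ≤ (j : ℕ)) → M i j = (1 : Matrix (Fin n) (Fin n) R) i j) →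
      ∀ A : SpecialLinearGroup (Fin n) R, (A : Matrix (Fin n) (Fin n) R) = M →
        A ∈ commutator (SpecialLinearGroup (Fin n) R) := by
  induction k with
  | zero =>
    intro M hM hcond A hA
    have hM1 : M = 1 := by
      ext i j
      exact hcond i j (Or.inl (Nat.zero_le _))
    have : A = 1 := Subtype.ext (by rw [hA, hM1]; rfl)
    rw [this]
    exact Subgroup.one_mem _
  | succ k ih =>
    intro M hM hcond A hA
    by_cases hkn : k < n
    · by_cases hk0 : k = 0
      · -- the matrix is 1 outside the top-left 1×1 corner, hence diagonal; det gives M = 1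
        subst hk0
        set K : Fin n := ⟨0, hkn⟩ with hK
        have hcor : ∀ i j : Fin n, ¬(i = K ∧ j = K) → M i j = (1 : Matrix (Fin n) (Fin n) R) i j := by
          intro i j hij
          apply hcond
          by_contra hc
          push_neg at hc
          exact hij ⟨Fin.ext (show (i : ℕ) = (0 : ℕ) by omega), Fin.ext (show (j : ℕ) = (0 : ℕ) by omega)⟩
        have hdiag : M = diagonal (fun i => M i i) := by
          ext i j
          by_cases hij : i = j
          · subst hij; rw [diagonal_apply_eq]
          · rw [diagonal_apply_ne _ hij, hcor i j (fun h => hij (h.1.trans h.2.symm)),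
              Matrix.one_apply_ne hij]
        have hMKK : M K K = 1 := by
          have hdet2 : det M = ∏ i, M i i := by
            conv_lhs => rw [hdiag, det_diagonal]
          rw [hM] at hdet2
          have hprod : ∏ i, M i i = M K K := by
            apply Finset.prod_eq_single_of_mem K (Finset.mem_univ K)
            intro b _ hb
            rw [hcor b b (fun h => hb h.1), Matrix.one_apply_eq]
          rw [hprod] at hdet2
          exact hdet2.symm
        have hM1 : M = 1 := by
          ext i j
          by_cases hij : i = K ∧ j = K
          · rw [hij.1, hij.2, hMKK, Matrix.one_apply_eq]
          · exact hcor i j hij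
        have : A = 1 := Subtype.ext (by rw [hA, hM1]; rfl)
        rw [this]
        exact Subgroup.one_mem _
      · -- main step
        set K : Fin n := ⟨k, hkn⟩ with hK
        set Km : Fin n := ⟨k - 1, by omega⟩ with hKm
        have hKmK : Km ≠ K := by
          intro h
          have := Fin.val_eq_of_eq h
          simp only [hKm, hK] at this
          omega
        have hKval : (K : ℕ) = k := rfl
        have hKmval : (Km : ℕ) = k - 1 := rfl
        obtain ⟨i₀, hi₀⟩ := exists_unit_col M hM K
        have hi₀le : (i₀ : ℕ) ≤ k := by
          by_contra hgt
          push_neg at hgt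
          have hne : i₀ ≠ K := by intro he; rw [he, hKval] at hgt; omega
          rw [hcond i₀ K (Or.inl hgt), Matrix.one_apply_ne hne] at hi₀
          exact not_isUnit_zero hi₀
        by_cases hMKK : IsUnit (M K K)
        · -- the pivot entry is already a unit; first set entry (Km, K) to 1,
          -- then use it to set the pivot to 1
          set u : Rˣ := hMKK.unit with hu
          have huv : (u : R) = M K K := hMKK.unit_spec
          set c₁ : R := (1 - M Km K) * ↑u⁻¹ with hc₁
          set v₁ : Fin n → R := Pi.single Km c₁ with hv₁
          have hv₁K : v₁ K = 0 := by
            rw [hv₁, Pi.single_apply, if_neg (Ne.symm hKmK)]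
          set N₁ : Matrix (Fin n) (Fin n) R := Ec K v₁ * M with hN₁
          have hN₁e : ∀ i j, N₁ i j = M i j + v₁ i * M K j := fun i j => Ec_mul K v₁ M i j
          have hN₁KmK : N₁ Km K = 1 := by
            have hstep : c₁ * M K K = 1 - M Km K := by
              rw [hc₁, ← huv, mul_assoc, Units.inv_mul, mul_one]
            rw [hN₁e, hv₁, Pi.single_eq_same, hstep]
            ring
          have hN₁KK : N₁ K K = M K K := by rw [hN₁e, hv₁K, zero_mul, add_zero]
          set c₂ : R := 1 - M K K with hc₂
          set v₂ : Fin n → R := Pi.single K c₂ with hv₂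
          have hv₂Km : v₂ Km = 0 := by
            rw [hv₂, Pi.single_apply, if_neg hKmK]
          set N : Matrix (Fin n) (Fin n) R := Ec Km v₂ * N₁ with hN
          have hNe : ∀ i j, N i j = N₁ i j + v₂ i * N₁ Km j := fun i j => Ec_mul Km v₂ N₁ i j
          have hNKK : N K K = 1 := by
            rw [hNe, hN₁KmK, hN₁KK, hv₂, Pi.single_eq_same, hc₂]
            ring
          have hNout : ∀ i j : Fin n, (k + 1 ≤ (i : ℕ) ∨ k + 1 ≤ (j : ℕ)) →
              N i j = (1 : Matrix (Fin n) (Fin n) R) i j := by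
            intro i j hij
            rcases hij with h | h
            · have hiK' : i ≠ K := by intro he; rw [he, hKval] at h; omega
              have hiKm' : i ≠ Km := by intro he; rw [he, hKmval] at h; omega
              have hv₁i : v₁ i = 0 := by rw [hv₁, Pi.single_apply, if_neg hiKm']
              have hv₂i : v₂ i = 0 := by rw [hv₂, Pi.single_apply, if_neg hiK']
              rw [hNe, hN₁e, hv₁i, hv₂i, zero_mul, zero_mul, add_zero, add_zero]
              exact hcond i j (Or.inl h)
            · have hKj : K ≠ j := by intro he; rw [← he, hKval] at h; omega
              have hKmj : Km ≠ j := by intro he; rw [← he, hKmval] at h; omega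
              have hMKj : M K j = 0 := by
                rw [hcond K j (Or.inr h), Matrix.one_apply_ne hKj]
              have hMKmj : M Km j = 0 := by
                rw [hcond Km j (Or.inr h), Matrix.one_apply_ne hKmj]
              have ha1 : N₁ Km j = 0 := by rw [hN₁e, hMKj, hMKmj, mul_zero, add_zero]
              have ha2 : N₁ i j = M i j := by rw [hN₁e, hMKj, mul_zero, add_zero]
              rw [hNe, ha1, ha2, mul_zero, add_zero]
              exact hcond i j (Or.inr h)
          obtain ⟨hE₁det, hE₁mem⟩ := Ec_mem h2 h3 K v₁ hv₁K
          obtain ⟨hE₂det, hE₂mem⟩ := Ec_mem h2 h3 Km v₂ hv₂Km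
          have hN₁det : det N₁ = 1 := by rw [hN₁, det_mul, hE₁det, hM, one_mul]
          have hNdet : det N = 1 := by rw [hN, det_mul, hE₂det, hN₁det, one_mul]
          set E₁ : SpecialLinearGroup (Fin n) R := ⟨Ec K v₁, hE₁det⟩ with hE₁
          set E₂ : SpecialLinearGroup (Fin n) R := ⟨Ec Km v₂, hE₂det⟩ with hE₂
          set B₁ : SpecialLinearGroup (Fin n) R := ⟨N₁, hN₁det⟩ with hB₁
          set B : SpecialLinearGroup (Fin n) R := ⟨N, hNdet⟩ with hB
          have hprod₁ : E₁ * A = B₁ := by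
            apply Subtype.ext
            show Ec K v₁ * (A : Matrix (Fin n) (Fin n) R) = N₁
            rw [hA, hN₁]
          have hprod₂ : E₂ * B₁ = B := by
            apply Subtype.ext
            show Ec Km v₂ * N₁ = N
            rw [hN]
          exact mem_of_mul_mem hprod₁ (hE₁mem E₁ rfl)
            (mem_of_mul_mem hprod₂ (hE₂mem E₂ rfl)
              (step2 h2 h3 k hkn ih N hNdet hNout hNKK B rfl))
        · -- the pivot is not a unit, but row i₀ has a unit entry in column K, and i₀ ≠ K
          have hne : i₀ ≠ K := fun h => hMKK (h ▸ hi₀)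
          set u : Rˣ := hi₀.unit with hu
          have huv : (u : R) = M i₀ K := hi₀.unit_spec
          set c : R := (1 - M K K) * ↑u⁻¹ with hc
          set v : Fin n → R := Pi.single K c with hv
          have hvi₀ : v i₀ = 0 := by rw [hv, Pi.single_apply, if_neg hne]
          set N : Matrix (Fin n) (Fin n) R := Ec i₀ v * M with hN
          have hNe : ∀ i j, N i j = M i j + v i * M i₀ j := fun i j => Ec_mul i₀ v M i j
          have hNKK : N K K = 1 := by
            have hstep : c * M i₀ K = 1 - M K K := by
              rw [hc, ← huv, mul_assoc, Units.inv_mul, mul_one]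
            rw [hNe, hv, Pi.single_eq_same, hstep]
            ring
          have hNout : ∀ i j : Fin n, (k + 1 ≤ (i : ℕ) ∨ k + 1 ≤ (j : ℕ)) →
              N i j = (1 : Matrix (Fin n) (Fin n) R) i j := by
            intro i j hij
            rcases hij with h | h
            · have hiK' : i ≠ K := by intro he; rw [he, hKval] at h; omega
              have hvi : v i = 0 := by rw [hv, Pi.single_apply, if_neg hiK']
              rw [hNe, hvi, zero_mul, add_zero]
              exact hcond i j (Or.inl h)
            · have hi₀j : i₀ ≠ j := by intro he; rw [he] at hi₀le; omega
              have hMi₀j : M i₀ j = 0 := by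
                rw [hcond i₀ j (Or.inr h), Matrix.one_apply_ne hi₀j]
              rw [hNe, hMi₀j, mul_zero, add_zero]
              exact hcond i j (Or.inr h)
          obtain ⟨hEdet, hEmem⟩ := Ec_mem h2 h3 i₀ v hvi₀
          have hNdet : det N = 1 := by rw [hN, det_mul, hEdet, hM, one_mul]
          set E : SpecialLinearGroup (Fin n) R := ⟨Ec i₀ v, hEdet⟩ with hE
          set B : SpecialLinearGroup (Fin n) R := ⟨N, hNdet⟩ with hB
          have hprod : E * A = B := by
            apply Subtype.ext
            show Ec i₀ v * (A : Matrix (Fin n) (Fin n) R) = N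
            rw [hA, hN]
          exact mem_of_mul_mem hprod (hEmem E rfl)
            (step2 h2 h3 k hkn ih N hNdet hNout hNKK B rfl)
    · -- k ≥ n : the hypothesis of the inductive step is vacuous
      push_neg at hkn
      refine ih M hM (fun i j hij => ?_) A hA
      exfalso
      have hi := i.isLt
      have hj := j.isLt
      omega

end SLperfect

/-- For any prime `p ≥ 5` and any `n ≥ 2`, the group `SL_n(ℤ_p)` is perfect,
i.e. it equals its own commutator subgroup. -/
theorem SLnZp_perfect (p : ℕ) [Fact p.Prime] (h5 : 5 ≤ p) (n : ℕ) (hn : 2 ≤ n) :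
    commutator (Matrix.SpecialLinearGroup (Fin n) ℤ_[p]) = ⊤ := by
  have hunit : ∀ m : ℤ, 0 < m → m < 5 → IsUnit ((m : ℤ_[p])) := by
    intro m hm1 hm2
    have hp5 : (5 : ℤ) ≤ (p : ℤ) := by exact_mod_cast h5
    have hnd : ¬((p : ℤ) ∣ m) := by
      intro hd
      have := Int.le_of_dvd hm1 hd
      omega
    have hnorm : ¬(‖((m : ℤ) : ℤ_[p])‖ < 1) := by
      rw [PadicInt.norm_int_lt_one_iff_dvd]
      exact hnd
    by_contra hu
    exact hnorm (PadicInt.not_isUnit_iff.mp hu)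
  have h2 : IsUnit (2 : ℤ_[p]) := by
    have := hunit 2 (by norm_num) (by norm_num)
    simpa using this
  have h3 : IsUnit (3 : ℤ_[p]) := by
    have := hunit 3 (by norm_num) (by norm_num)
    simpa using this
  rw [Subgroup.eq_top_iff']
  intro A
  refine SLperfect.main_aux h2 h3 n A.val A.2 (fun i j hij => ?_) A rfl
  exfalso
  have hi := i.isLt
  have hj := j.isLt
  omega
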